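/- The set L(2ℕ+1) = { x ∈ ℓ∞ : |L_x| is odd and ≥ 3 } is not densely lineable: L(2ℕ+1) ∪ {0} contains no dense infinite-dimensional subspace of ℓ∞. -/

import Mathlib

open Filter Topology Set ENNReal

noncomputable section

/-- The set of accumulation points of a real sequence: limits of convergent subsequences. -/
def accPts (x : ℕ → ℝ) : Set ℝ :=
  {a | ∃ φ : ℕ → ℕ, StrictMono φ ∧ Tendsto (fun k => x (φ k)) atTop (𝓝 a)}


/-- The space ℓ∞ of bounded real sequences. -/
abbrev Linf : Type := ↥(lp (fun _ : ℕ => ℝ) ∞)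

/-- Accumulation points of an element of ℓ∞. -/
def accPtsL (z : Linf) : Set ℝ := accPts (fun n => z n)

namespace OddNDL

lemma apply_abs_le (z : Linf) (n : ℕ) : |z n| ≤ ‖z‖ := by
  have := lp.norm_apply_le_norm (E := fun _ : ℕ => ℝ) ENNReal.top_ne_zero z n
  rwa [Real.norm_eq_abs] at this

lemma bw {y : ℕ → ℝ} {C : ℝ} (h : ∀ n, |y n| ≤ C) :
    ∃ b, ∃ θ : ℕ → ℕ, StrictMono θ ∧ Tendsto (fun k => y (θ k)) atTop (𝓝 b) := by
  obtain ⟨a, -, θ, hθ, hconv⟩ :=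
    tendsto_subseq_of_bounded (Metric.isBounded_Icc (-C) C) (x := y)
      (fun n => by rcases abs_le.mp (h n) with ⟨h1, h2⟩; exact ⟨h1, h2⟩)
  exact ⟨a, θ, hθ, hconv⟩

def Jset (z w : Linf) : Set (ℝ × ℝ) :=
  {p | ∃ θ : ℕ → ℕ, StrictMono θ ∧
    Tendsto (fun k => ((z (θ k), w (θ k)) : ℝ × ℝ)) atTop (𝓝 p)}

lemma Jset_fst {z w : Linf} {p : ℝ × ℝ} (hp : p ∈ Jset z w) : p.1 ∈ accPtsL z := by
  obtain ⟨θ, hθ, hc⟩ := hp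
  exact ⟨θ, hθ, (continuous_fst.tendsto p).comp hc⟩

lemma Jset_snd {z w : Linf} {p : ℝ × ℝ} (hp : p ∈ Jset z w) : p.2 ∈ accPtsL w := by
  obtain ⟨θ, hθ, hc⟩ := hp
  exact ⟨θ, hθ, (continuous_snd.tendsto p).comp hc⟩

lemma Jset_exists {z w : Linf} {a : ℝ} (ha : a ∈ accPtsL z) : ∃ b, (a, b) ∈ Jset z w := by
  obtain ⟨φ, hφ, hconv⟩ := ha
  obtain ⟨b, θ, hθ, hbc⟩ := bw (y := fun k => w (φ k)) (C := ‖w‖) (fun k => apply_abs_le w _)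
  exact ⟨b, φ ∘ θ, hφ.comp hθ, (hconv.comp hθ.tendsto_atTop).prodMk_nhds hbc⟩

lemma comb_apply (c : ℝ) (z w : Linf) (n : ℕ) : (c • z + w) n = c * z n + w n := by
  rw [lp.coeFn_add, Pi.add_apply, lp.coeFn_smul, Pi.smul_apply, smul_eq_mul]

lemma accPtsL_comb (c : ℝ) (z w : Linf) :
    accPtsL (c • z + w) = (fun p : ℝ × ℝ => c * p.1 + p.2) '' Jset z w := by
  ext x
  constructor
  · rintro ⟨φ, hφ, hx⟩
    obtain ⟨a, θ₁, hθ₁, ha⟩ := bw (y := fun k => z (φ k)) (C := ‖z‖) (fun k => apply_abs_le z _)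
    obtain ⟨b, θ₂, hθ₂, hb⟩ :=
      bw (y := fun k => w (φ (θ₁ k))) (C := ‖w‖) (fun k => apply_abs_le w _)
    have hza : Tendsto (fun k => z (φ (θ₁ (θ₂ k)))) atTop (𝓝 a) := ha.comp hθ₂.tendsto_atTop
    have hpair : ((a, b) : ℝ × ℝ) ∈ Jset z w :=
      ⟨φ ∘ θ₁ ∘ θ₂, hφ.comp (hθ₁.comp hθ₂), hza.prodMk_nhds hb⟩
    have h1 : Tendsto (fun k => (c • z + w) (φ (θ₁ (θ₂ k)))) atTop (𝓝 x) :=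
      hx.comp (hθ₁.comp hθ₂).tendsto_atTop
    have h2 : Tendsto (fun k => (c • z + w) (φ (θ₁ (θ₂ k)))) atTop (𝓝 (c * a + b)) := by
      have := (hza.const_mul c).add hb
      simpa [comb_apply] using this
    exact ⟨(a, b), hpair, (tendsto_nhds_unique h1 h2).symm⟩
  · rintro ⟨⟨a, b⟩, ⟨θ, hθ, hab⟩, rfl⟩
    refine ⟨θ, hθ, ?_⟩
    have ha : Tendsto (fun k => z (θ k)) atTop (𝓝 a) := (continuous_fst.tendsto _).comp hab
    have hb : Tendsto (fun k => w (θ k)) atTop (𝓝 b) := (continuous_snd.tendsto _).comp hab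
    have := (ha.const_mul c).add hb
    simpa [comb_apply] using this

lemma Jset_close {z w : Linf} {g : ℝ → ℝ} (hg : Continuous g) {δ : ℝ}
    (h : ∀ n, |w n - g (z n)| ≤ δ) {p : ℝ × ℝ} (hp : p ∈ Jset z w) :
    |p.2 - g p.1| ≤ δ := by
  obtain ⟨θ, hθ, hc⟩ := hp
  have ha : Tendsto (fun k => z (θ k)) atTop (𝓝 p.1) := (continuous_fst.tendsto p).comp hc
  have hb : Tendsto (fun k => w (θ k)) atTop (𝓝 p.2) := (continuous_snd.tendsto p).comp hc
  have hga : Tendsto (fun k => g (z (θ k))) atTop (𝓝 (g p.1)) := (hg.tendsto _).comp ha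
  have habs : Tendsto (fun k => |w (θ k) - g (z (θ k))|) atTop (𝓝 |p.2 - g p.1|) :=
    (continuous_abs.tendsto _).comp (hb.sub hga)
  exact le_of_tendsto habs (Eventually.of_forall fun k => h _)

lemma accPts_le_norm {z : Linf} {a : ℝ} (ha : a ∈ accPtsL z) : |a| ≤ ‖z‖ := by
  obtain ⟨θ, hθ, hc⟩ := ha
  exact le_of_tendsto ((continuous_abs.tendsto _).comp hc)
    (Eventually.of_forall fun k => apply_abs_le z _)

lemma accPtsL_zero : accPtsL (0 : Linf) = {0} := by
  ext a
  constructor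
  · rintro ⟨θ, hθ, hc⟩
    have h0 : Tendsto (fun _ : ℕ => (0 : ℝ)) atTop (𝓝 a) := by
      have : (fun k => (0 : Linf) (θ k)) = fun _ : ℕ => (0 : ℝ) := by
        funext k; simp [lp.coeFn_zero]
      rwa [this] at hc
    exact (tendsto_nhds_unique h0 tendsto_const_nhds) ▸ rfl
  · rintro rfl
    refine ⟨id, strictMono_id, ?_⟩
    have : (fun k => (0 : Linf) (id k)) = fun _ : ℕ => (0 : ℝ) := by
      funext k; simp [lp.coeFn_zero]
    rw [this]
    exact tendsto_const_nhds

end OddNDL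

open OddNDL

set_option maxHeartbeats 1000000 in
set_option synthInstance.maxHeartbeats 200000 in
theorem odd_not_densely_lineable :
    ¬ ∃ M : Submodule ℝ Linf, Dense (M : Set Linf) ∧ ¬ Module.Finite ℝ M ∧
      ∀ z ∈ M, z ≠ 0 → (accPtsL z).Finite ∧
        Odd (accPtsL z).ncard ∧ 3 ≤ (accPtsL z).ncard := by
  rintro ⟨M, hDense, -, hOdd⟩
  classical
  -- a nonzero element f of M
  have hone_mem : Memℓp (fun _ : ℕ => (1 : ℝ)) ∞ := by
    apply memℓp_infty
    refine ⟨1, ?_⟩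
    rintro x ⟨n, rfl⟩
    simp
  set one : Linf := ⟨fun _ => (1 : ℝ), hone_mem⟩ with hone_def
  have hone_norm : (1 : ℝ) ≤ ‖one‖ := by
    have h : |(1 : ℝ)| ≤ ‖one‖ := apply_abs_le one 0
    rwa [abs_one] at h
  obtain ⟨f, hfM, hfdist⟩ := Metric.mem_closure_iff.mp (hDense one) (1/2) (by norm_num)
  have hf0 : f ≠ 0 := by
    rintro rfl
    rw [dist_zero_right] at hfdist
    linarith
  obtain ⟨hAfin, hAodd, hAcard⟩ := hOdd f hfM hf0
  set A := accPtsL f with hA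
  obtain ⟨a₁, a₂, ha₁, ha₂, hne⟩ := (Set.one_lt_ncard_iff hAfin).mp (by omega)
  have ha₃ : ∃ a₃ ∈ A, a₃ ≠ a₁ ∧ a₃ ≠ a₂ := by
    by_contra h
    push_neg at h
    have hsub : A ⊆ {a₁, a₂} := by
      intro a ha
      by_cases h1 : a = a₁
      · exact Or.inl h1
      · by_cases h2 : a = a₂
        · exact Or.inr h2
        · exact absurd h2 (fun _ => h2 (h a ha h1))
    have hle := Set.ncard_le_ncard hsub ((Set.finite_singleton a₂).insert a₁)
    have h2 : ({a₁, a₂} : Set ℝ).ncard ≤ 2 := by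
      refine le_trans (Set.ncard_insert_le _ _) ?_
      simp
    omega
  obtain ⟨a₃, ha₃A, ha₃1, ha₃2⟩ := ha₃
  -- constants
  set R : ℝ := ‖f‖ + 1 with hR
  have hRpos : 0 < R := by positivity
  have hR1 : 1 ≤ R := by have := norm_nonneg f; linarith
  have habsA : ∀ a ∈ A, |a| ≤ R - 1 := by
    intro a ha
    have := accPts_le_norm ha
    rw [hR]
    linarith
  set d : ℝ := a₂ - a₁ with hd_def
  have hd0 : d ≠ 0 := sub_ne_zero.mpr (fun h => hne h.symm)
  have hdabs : 0 < |d| := abs_pos.mpr hd0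
  have hdle : |d| ≤ 2 * R := by
    have h1 := habsA a₁ ha₁
    have h2 := habsA a₂ ha₂
    have := abs_sub (a₂) (a₁)
    calc |d| = |a₂ - a₁| := rfl
      _ ≤ |a₂| + |a₁| := abs_sub _ _
      _ ≤ 2 * R := by linarith
  -- minimum gap of A
  obtain ⟨pm, hpmmem, hpmmin⟩ := Set.exists_min_image ((A ×ˢ A) \ {p : ℝ × ℝ | p.1 = p.2})
    (fun p => |p.1 - p.2|) ((hAfin.prod hAfin).diff)
    ⟨(a₁, a₂), ⟨⟨ha₁, ha₂⟩, by simpa using hne⟩⟩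
  set g₀ : ℝ := |pm.1 - pm.2| with hg₀_def
  have hpm_ne : pm.1 ≠ pm.2 := by
    have h := hpmmem.2
    simpa using h
  have hg₀pos : 0 < g₀ := abs_pos.mpr (sub_ne_zero.mpr hpm_ne)
  have hgap : ∀ a ∈ A, ∀ a' ∈ A, a ≠ a' → g₀ ≤ |a - a'| := by
    intro a ha a' ha' hne'
    exact hpmmin (a, a') ⟨⟨ha, ha'⟩, by simpa using hne'⟩
  have hg₀d : g₀ ≤ |d| := hgap a₂ ha₂ a₁ ha₁ (fun h => hne h.symm)
  have hg₀2R : g₀ ≤ 2 * R := le_trans hg₀d hdle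
  set σ : ℝ := 1 / d with hσ_def
  set η : ℝ := g₀ / (16 * R ^ 2) with hη_def
  set δ : ℝ := g₀ ^ 2 / (1000 * R ^ 2) with hδ_def
  have hηpos : 0 < η := by rw [hη_def]; positivity
  have hδpos : 0 < δ := by rw [hδ_def]; positivity
  have hσabs : 1 / (2 * R) ≤ |σ| := by
    rw [hσ_def, abs_div, abs_one]
    exact one_div_le_one_div_of_le hdabs hdle
  have hηle : η ≤ 1 / (8 * R) := by
    rw [hη_def, div_le_div_iff₀ (by positivity) (by positivity)]
    nlinarith
  have hηR : η * (2 * R) = g₀ / (8 * R) := by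
    rw [hη_def]
    field_simp
    ring
  have hclower : ∀ c : ℝ, |c - σ| ≤ η → 3 / (8 * R) ≤ |c| := by
    intro c hc
    have h1 : |σ| - |c| ≤ |c - σ| := by
      have h := abs_sub_abs_le_abs_sub σ c
      rwa [abs_sub_comm] at h
    have h2 : 1 / (2 * R) - 1 / (8 * R) = 3 / (8 * R) := by
      field_simp
      ring
    linarith [hσabs]
  have hnum1 : 2 * δ < 3 / (8 * R) * g₀ := by
    have e1 : 2 * δ = 2 * g₀ ^ 2 / (1000 * R ^ 2) := by rw [hδ_def]; ring
    have e2 : 3 / (8 * R) * g₀ = 3 * g₀ / (8 * R) := by ring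
    rw [e1, e2, div_lt_div_iff₀ (by positivity) (by positivity)]
    nlinarith [mul_le_mul_of_nonneg_right hg₀2R (mul_nonneg hg₀pos.le hRpos.le),
      mul_pos hg₀pos (mul_pos hRpos hRpos)]
  have hnum2 : 2 * δ ≤ η * g₀ := by
    have e1 : 2 * δ = 2 * g₀ ^ 2 / (1000 * R ^ 2) := by rw [hδ_def]; ring
    have e2 : η * g₀ = g₀ * g₀ / (16 * R ^ 2) := by rw [hη_def]; ring
    rw [e1, e2, div_le_div_iff₀ (by positivity) (by positivity)]
    nlinarith [mul_pos (mul_pos hg₀pos hg₀pos) (mul_pos hRpos hRpos)]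
  have hδhalf : δ < 1 / 2 := by
    rw [hδ_def, div_lt_div_iff₀ (by positivity) (by norm_num)]
    nlinarith [mul_le_mul hg₀2R hg₀2R hg₀pos.le (by positivity : (0:ℝ) ≤ 2 * R),
      mul_pos hRpos hRpos]
  clear_value R d σ η δ
  -- bump function at a₁
  set φb : ℝ → ℝ := fun x => max 0 (1 - |x - a₁| * (2 / g₀)) with hφb_def
  have hφbcont : Continuous φb := by
    apply continuous_const.max
    exact continuous_const.sub (((continuous_id.sub continuous_const).abs).mul continuous_const)
  have hφb1 : φb a₁ = 1 := by
    rw [hφb_def]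
    norm_num
  have hφb0 : ∀ a ∈ A, a ≠ a₁ → φb a = 0 := by
    intro a ha hne'
    have h1 : g₀ ≤ |a - a₁| := hgap a ha a₁ ha₁ hne'
    have h2 : (2 : ℝ) ≤ |a - a₁| * (2 / g₀) := by
      rw [mul_div_assoc', le_div_iff₀ hg₀pos]
      linarith
    have h3 : 1 - |a - a₁| * (2 / g₀) ≤ 0 := by linarith
    rw [hφb_def]
    simpa using max_eq_left h3
  have hφbbd : ∀ x, |φb x| ≤ 1 := by
    intro x
    rw [abs_le]
    constructor
    · have h : (0 : ℝ) ≤ φb x := le_max_left _ _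
      linarith
    · apply max_le (by norm_num)
      have h : 0 ≤ |x - a₁| * (2 / g₀) := by positivity
      linarith
  have hw₀mem : Memℓp (fun n => φb (f n)) ∞ := by
    apply memℓp_infty
    refine ⟨1, ?_⟩
    rintro x ⟨n, rfl⟩
    simpa using hφbbd (f n)
  set w₀ : Linf := ⟨fun n => φb (f n), hw₀mem⟩ with hw₀_def
  obtain ⟨v, hvM, hvdist⟩ := Metric.mem_closure_iff.mp (hDense w₀) δ hδpos
  have hvclose : ∀ n, |v n - φb (f n)| ≤ δ := by
    intro n
    have h1 : |(v - w₀) n| ≤ ‖v - w₀‖ := apply_abs_le _ n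
    have h3 : (v - w₀) n = v n - w₀ n := by rw [lp.coeFn_sub, Pi.sub_apply]
    have h4 : ‖v - w₀‖ = dist v w₀ := (dist_eq_norm _ _).symm
    have h5 : dist v w₀ < δ := by rwa [dist_comm] at hvdist
    have h6 : w₀ n = φb (f n) := rfl
    rw [h3, h6] at h1
    linarith
  -- the joint accumulation set
  set Jv := Jset f v with hJv_def
  have hwinA : ∀ p ∈ Jv, p.1 ∈ A := fun p hp => Jset_fst hp
  have hwin : ∀ p ∈ Jv, |p.2 - φb p.1| ≤ δ := fun p hp => Jset_close hφbcont hvclose hp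
  have hwin1 : ∀ p ∈ Jv, p.1 = a₁ → |p.2 - 1| ≤ δ := by
    intro p hp h1
    have h := hwin p hp
    rwa [h1, hφb1] at h
  have hwin0 : ∀ p ∈ Jv, p.1 ≠ a₁ → |p.2| ≤ δ := by
    intro p hp h1
    have h := hwin p hp
    rwa [hφb0 p.1 (hwinA p hp) h1, sub_zero] at h
  obtain ⟨b₁, hb₁⟩ := Jset_exists (w := v) ha₁
  have hb₁win : |b₁ - 1| ≤ δ := hwin1 _ hb₁ rfl
  have hv0 : v ≠ 0 := by
    rintro rfl
    have h := Jset_snd hb₁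
    rw [accPtsL_zero, Set.mem_singleton_iff] at h
    have h' : b₁ = 0 := h
    rw [h', zero_sub, abs_neg, abs_one] at hb₁win
    linarith
  obtain ⟨hvfin, -, -⟩ := hOdd v hvM hv0
  have hJfin : Jv.Finite := Set.Finite.subset (hAfin.prod hvfin)
    (fun p hp => Set.mem_prod.mpr ⟨Jset_fst hp, Jset_snd hp⟩)
  -- fibers over a₁ and a₂
  set B₁ : Set ℝ := {b | (a₁, b) ∈ Jv} with hB₁_def
  set B₂ : Set ℝ := {b | (a₂, b) ∈ Jv} with hB₂_def
  have hB₁fin : B₁.Finite :=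
    Set.Finite.subset (hJfin.image Prod.snd) (fun b hb => ⟨(a₁, b), hb, rfl⟩)
  have hB₂fin : B₂.Finite :=
    Set.Finite.subset (hJfin.image Prod.snd) (fun b hb => ⟨(a₂, b), hb, rfl⟩)
  obtain ⟨b₂, hb₂⟩ := Jset_exists (w := v) ha₂
  obtain ⟨bh, hbhB, hbhmax⟩ := Set.exists_max_image B₁ id hB₁fin ⟨b₁, hb₁⟩
  obtain ⟨bl, hblB, hblmin⟩ := Set.exists_min_image B₂ id hB₂fin ⟨b₂, hb₂⟩
  have hbhwin : |bh - 1| ≤ δ := hwin1 (a₁, bh) hbhB rfl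
  have hblwin : |bl| ≤ δ := hwin0 (a₂, bl) hblB (fun h => hne h.symm)
  have hwinB1 : ∀ b ∈ B₁, |b - 1| ≤ δ := fun b hb => hwin1 (a₁, b) hb rfl
  have hwinB2 : ∀ b ∈ B₂, |b| ≤ δ := fun b hb => hwin0 (a₂, b) hb (fun h => hne h.symm)
  have key : ∀ c : ℝ, |c - σ| ≤ η → ∀ p ∈ Jv, ∀ q ∈ Jv, p ≠ q →
      c * p.1 + p.2 = c * q.1 + q.2 → (p.1 = a₁ ∧ q.1 = a₂) ∨ (p.1 = a₂ ∧ q.1 = a₁) := by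
    intro c hc p hp q hq hpq heq
    have hpA := hwinA p hp
    have hqA := hwinA q hq
    have hcabs := hclower c hc
    have h11 : p.1 ≠ q.1 := by
      intro h
      apply hpq
      have h2 : p.2 = q.2 := by
        rw [h] at heq
        linarith
      exact Prod.ext h h2
    have hgapPQ : g₀ ≤ |p.1 - q.1| := hgap _ hpA _ hqA h11
    have imposs : ∀ r ∈ Jv, ∀ s ∈ Jv, r.1 = a₁ → s.1 ≠ a₁ → s.1 ≠ a₂ →
        c * r.1 + r.2 = c * s.1 + s.2 → False := by
      intro r hr s hs hr1 hs1 hs2 he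
      have hrwin : |r.2 - 1| ≤ δ := hwin1 r hr hr1
      have hswin : |s.2| ≤ δ := hwin0 s hs hs1
      have hsA := hwinA s hs
      have e1 : c * (a₁ - s.1) + 1 = 1 + s.2 - r.2 := by
        rw [← hr1]
        linear_combination he
      have e2 : c * (a₁ - s.1) + 1 = (a₂ - s.1) / d + (c - σ) * (a₁ - s.1) := by
        rw [hσ_def, hd_def]
        field_simp [sub_ne_zero.mpr (Ne.symm hne)]
        ring
      have h3 : g₀ / (2 * R) ≤ |(a₂ - s.1) / d| := by
        rw [abs_div, div_le_div_iff₀ (by positivity) hdabs]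
        exact mul_le_mul (hgap a₂ ha₂ s.1 hsA (fun h => hs2 h.symm)) hdle (abs_nonneg d)
          (abs_nonneg _)
      have h4 : |(c - σ) * (a₁ - s.1)| ≤ η * (2 * R) := by
        rw [abs_mul]
        apply mul_le_mul hc ?_ (abs_nonneg _) hηpos.le
        have i1 := habsA a₁ ha₁
        have i2 := habsA s.1 hsA
        linarith [abs_sub a₁ s.1]
      have hXY : (1 + s.2 - r.2) - (c - σ) * (a₁ - s.1) = (a₂ - s.1) / d := by
        rw [← e1, e2]; ring
      have t1 : |(a₂ - s.1) / d| ≤ |1 + s.2 - r.2| + |(c - σ) * (a₁ - s.1)| := by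
        rw [← hXY]
        exact abs_sub _ _
      have h6 : |1 + s.2 - r.2| ≤ 2 * δ := by
        rw [abs_le] at hrwin hswin ⊢
        exact ⟨by linarith [hrwin.1, hswin.1], by linarith [hrwin.2, hswin.2]⟩
      have h8 : g₀ / (2 * R) - η * (2 * R) = 3 / (8 * R) * g₀ := by
        rw [hηR]
        field_simp [hRpos.ne']
        ring
      have hx0 : g₀ / (2 * R) ≤ |1 + s.2 - r.2| + |(c - σ) * (a₁ - s.1)| := le_trans h3 t1
      have hx1 : g₀ / (2 * R) ≤ 2 * δ + η * (2 * R) := le_trans hx0 (add_le_add h6 h4)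
      have hx2 : 3 / (8 * R) * g₀ ≤ 2 * δ := by linarith [hx1, h8]
      linarith [hx2, hnum1]
    rcases eq_or_ne p.1 a₁ with h1 | h1
    · rcases eq_or_ne q.1 a₂ with h2 | h2
      · exact Or.inl ⟨h1, h2⟩
      · have hq1 : q.1 ≠ a₁ := fun h => h11 (h1.trans h.symm)
        exact (imposs p hp q hq h1 hq1 h2 heq).elim
    · rcases eq_or_ne q.1 a₁ with h2 | h2
      · rcases eq_or_ne p.1 a₂ with h3 | h3
        · exact Or.inr ⟨h3, h2⟩
        · exact (imposs q hq p hp h2 h1 h3 heq.symm).elim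
      · have hpw : |p.2| ≤ δ := hwin0 p hp h1
        have hqw : |q.2| ≤ δ := hwin0 q hq h2
        have e : c * (p.1 - q.1) = q.2 - p.2 := by linear_combination heq
        have h7 : 3 / (8 * R) * g₀ ≤ |c * (p.1 - q.1)| := by
          rw [abs_mul]
          exact mul_le_mul hcabs hgapPQ hg₀pos.le (abs_nonneg c)
        have h8 : |q.2 - p.2| ≤ 2 * δ := by
          rw [abs_le] at hpw hqw ⊢
          exact ⟨by linarith [hpw.2, hqw.1], by linarith [hpw.1, hqw.2]⟩
        rw [e] at h7
        linarith
  -- a collision-free direction c'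
  have hWinf : (Set.Icc (σ - η) (σ + η)).Infinite := Set.Icc_infinite (by linarith)
  have hbadfin : ((fun bb : ℝ × ℝ => (bb.1 - bb.2) / d) '' (B₁ ×ˢ B₂)).Finite :=
    (hB₁fin.prod hB₂fin).image _
  obtain ⟨c', hc'mem⟩ := (hWinf.diff hbadfin).nonempty
  have hc'W : c' ∈ Set.Icc (σ - η) (σ + η) := hc'mem.1
  have hc'η : |c' - σ| ≤ η := by
    rw [abs_le]
    exact ⟨by linarith [hc'W.1], by linarith [hc'W.2]⟩
  have hc'no : ∀ b ∈ B₁, ∀ b' ∈ B₂, b - b' ≠ c' * d := by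
    intro b hb b' hb' he
    apply hc'mem.2
    refine ⟨(b, b'), Set.mem_prod.mpr ⟨hb, hb'⟩, ?_⟩
    show (b - b') / d = c'
    rw [he]
    exact mul_div_cancel_right₀ c' hd0
  have hrel1 : ∀ x ∈ Jv, ∀ y ∈ Jv, x.1 = a₁ → y.1 = a₂ →
      c' * x.1 + x.2 = c' * y.1 + y.2 → False := by
    intro x hx y hy hx1 hy1 hxy
    have hbx : x.2 ∈ B₁ := by
      show (a₁, x.2) ∈ Jv
      rw [← hx1, Prod.mk.eta]
      exact hx
    have hby : y.2 ∈ B₂ := by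
      show (a₂, y.2) ∈ Jv
      rw [← hy1, Prod.mk.eta]
      exact hy
    apply hc'no x.2 hbx y.2 hby
    rw [hx1, hy1] at hxy
    rw [hd_def]
    linear_combination hxy
  have hinj1 : Set.InjOn (fun p : ℝ × ℝ => c' * p.1 + p.2) Jv := by
    intro p hp q hq he
    by_contra hpq
    rcases key c' hc'η p hp q hq hpq he with ⟨h1, h2⟩ | ⟨h1, h2⟩
    · exact hrel1 p hp q hq h1 h2 he
    · exact hrel1 q hq p hp h2 h1 he.symm
  have hN1 : (accPtsL (c' • f + v)).ncard = Jv.ncard := by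
    rw [accPtsL_comb, ← hJv_def]
    exact Set.ncard_image_of_injOn hinj1
  -- the merging direction cs
  set cs : ℝ := (bh - bl) / d with hcs_def
  have hcsd : cs * d = bh - bl := by
    rw [hcs_def]
    exact div_mul_cancel₀ _ hd0
  have hcsd' : cs * (a₂ - a₁) = bh - bl := by rw [← hd_def]; exact hcsd
  have hcsη : |cs - σ| ≤ η := by
    have e3 : cs - σ = (bh - bl - 1) / d := by
      rw [hcs_def, hσ_def, div_sub_div_same]
    rw [e3, abs_div, div_le_iff₀ hdabs]
    have h1 : |bh - bl - 1| ≤ 2 * δ := by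
      rw [abs_le] at hbhwin hblwin ⊢
      exact ⟨by linarith [hbhwin.1, hblwin.2], by linarith [hbhwin.2, hblwin.1]⟩
    calc |bh - bl - 1| ≤ 2 * δ := h1
      _ ≤ η * g₀ := hnum2
      _ ≤ η * |d| := mul_le_mul_of_nonneg_left hg₀d hηpos.le
  have hinj2 : Set.InjOn (fun p : ℝ × ℝ => cs * p.1 + p.2) (Jv \ {(a₂, bl)}) := by
    intro p hp q hq he
    by_contra hpq
    have main : ∀ x ∈ Jv, ∀ y ∈ Jv, y ≠ (a₂, bl) → x.1 = a₁ → y.1 = a₂ →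
        cs * x.1 + x.2 = cs * y.1 + y.2 → False := by
      intro x hx y hy hysing hx1 hy1 hxy
      have hbx : x.2 ∈ B₁ := by
        show (a₁, x.2) ∈ Jv
        rw [← hx1, Prod.mk.eta]
        exact hx
      have hby : y.2 ∈ B₂ := by
        show (a₂, y.2) ∈ Jv
        rw [← hy1, Prod.mk.eta]
        exact hy
      have hrel : x.2 - y.2 = bh - bl := by
        rw [hx1, hy1] at hxy
        linear_combination hxy + hcsd'
      have hxle : x.2 ≤ bh := hbhmax x.2 hbx
      have hyge : bl ≤ y.2 := hblmin y.2 hby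
      have hy2 : y.2 = bl := by linarith
      exact hysing (Prod.ext hy1 hy2)
    rcases key cs hcsη p hp.1 q hq.1 hpq he with ⟨h1, h2⟩ | ⟨h1, h2⟩
    · exact main p hp.1 q hq.1 (fun hh => hq.2 (Set.mem_singleton_iff.mpr hh)) h1 h2 he
    · exact main q hq.1 p hp.1 (fun hh => hp.2 (Set.mem_singleton_iff.mpr hh)) h2 h1 he.symm
  have himeq : (fun p : ℝ × ℝ => cs * p.1 + p.2) '' Jv
      = (fun p : ℝ × ℝ => cs * p.1 + p.2) '' (Jv \ {(a₂, bl)}) := by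
    apply Set.Subset.antisymm
    · rintro x ⟨p, hp, rfl⟩
      by_cases hpe : p = (a₂, bl)
      · refine ⟨(a₁, bh), ⟨show (a₁, bh) ∈ Jv from hbhB, ?_⟩, ?_⟩
        · simp only [Set.mem_singleton_iff]
          intro hcontra
          exact hne (congrArg Prod.fst hcontra)
        · rw [hpe]
          show cs * a₁ + bh = cs * a₂ + bl
          linear_combination -hcsd'
      · exact ⟨p, ⟨hp, hpe⟩, rfl⟩
    · exact Set.image_mono Set.diff_subset
  have hN2 : (accPtsL (cs • f + v)).ncard = Jv.ncard - 1 := by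
    rw [accPtsL_comb, ← hJv_def, himeq, Set.ncard_image_of_injOn hinj2,
      Set.ncard_diff_singleton_of_mem (show (a₂, bl) ∈ Jv from hblB)]
  -- |Jv| ≥ 3
  obtain ⟨b₃, hb₃⟩ := Jset_exists (w := v) ha₃A
  have h3le : 3 ≤ Jv.ncard := by
    have htrip : ({(a₁, b₁), (a₂, b₂), (a₃, b₃)} : Set (ℝ × ℝ)).ncard = 3 := by
      apply Set.ncard_eq_three.mpr
      refine ⟨_, _, _, ?_, ?_, ?_, rfl⟩
      · simp [Prod.ext_iff, hne]
      · simp [Prod.ext_iff, Ne.symm ha₃1]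
      · simp [Prod.ext_iff, Ne.symm ha₃2]
    rw [← htrip]
    refine Set.ncard_le_ncard ?_ hJfin
    intro x hx
    simp only [Set.mem_insert_iff, Set.mem_singleton_iff] at hx
    rcases hx with rfl | rfl | rfl
    · exact hb₁
    · exact hb₂
    · exact hb₃
  -- conclusion
  have humem1 : c' • f + v ∈ M := M.add_mem (M.smul_mem c' hfM) hvM
  have humem2 : cs • f + v ∈ M := M.add_mem (M.smul_mem cs hfM) hvM
  have hu1ne : c' • f + v ≠ 0 := by
    intro h0
    rw [h0, accPtsL_zero] at hN1
    simp only [Set.ncard_singleton] at hN1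
    omega
  have hu2ne : cs • f + v ≠ 0 := by
    intro h0
    rw [h0, accPtsL_zero] at hN2
    simp only [Set.ncard_singleton] at hN2
    omega
  obtain ⟨-, hodd1, -⟩ := hOdd _ humem1 hu1ne
  obtain ⟨-, hodd2, -⟩ := hOdd _ humem2 hu2ne
  rw [hN1] at hodd1
  rw [hN2] at hodd2
  obtain ⟨k1, hk1⟩ := hodd1
  obtain ⟨k2, hk2⟩ := hodd2
  omega
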